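/- Let N ≥ 1 and let c₁,…,c_N be nonzero real constants. Define h⁺ : ℝ^N × ℝ^N → ℝ by h⁺(p, p̃) = Σ_{k=1}^N c_k ( e^{p_k} − e^{p̃_k} ). Then for every i = 1,…,N: Σ_{j=1}^N ( ∂h⁺/∂p_j + ∂h⁺/∂p̃_j ) + (1/c_i) ∂h⁺/∂p_i = e^{p_i} + Σ_{k=1}^N c_k ( e^{p_k} − e^{p̃_k} ), and Σ_{j=1}^N ( ∂h⁺/∂p_j + ∂h⁺/∂p̃_j ) − (1/c_i) ∂h⁺/∂p̃_i = e^{p̃_i} + Σ_{k=1}^N c_k ( e^{p_k} − e^{p̃_k} ). -/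
import Mathlib


/-- Hamiltonian form of the constrained d2DTL x-flow system (hydro3x): the
Hamiltonian operator `J = (E + diag(C⁻¹, -C⁻¹)) ∂_t` applied to the gradient of
the Hamiltonian density `h⁺ = ∑ cₖ (e^{pₖ} - e^{p̃ₖ})` recovers its right-hand
sides. -/
theorem stmt12
    (N : ℕ) (hN : 1 ≤ N) (c : Fin N → ℝ) (hc : ∀ i, c i ≠ 0)
    (hplus : (Fin N → ℝ) → (Fin N → ℝ) → ℝ)
    (hdef : ∀ p pt, hplus p pt = ∑ k, c k * (Real.exp (p k) - Real.exp (pt k))) :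
    ∀ (i : Fin N) (p pt : Fin N → ℝ),
      ((∑ j, (deriv (fun s => hplus (Function.update p j s) pt) (p j)
          + deriv (fun s => hplus p (Function.update pt j s)) (pt j)))
        + (1 / c i) * deriv (fun s => hplus (Function.update p i s) pt) (p i)
        = Real.exp (p i) + ∑ k, c k * (Real.exp (p k) - Real.exp (pt k)))
      ∧ ((∑ j, (deriv (fun s => hplus (Function.update p j s) pt) (p j)
          + deriv (fun s => hplus p (Function.update pt j s)) (pt j)))
        - (1 / c i) * deriv (fun s => hplus p (Function.update pt i s)) (pt i)
        = Real.exp (pt i) + ∑ k, c k * (Real.exp (p k) - Real.exp (pt k))) := by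
  intro i p pt
  have key1 : ∀ j : Fin N,
      deriv (fun s => hplus (Function.update p j s) pt) (p j) = c j * Real.exp (p j) := by
    intro j
    have hfun : (fun s => hplus (Function.update p j s) pt)
        = fun s => c j * (Real.exp s - Real.exp (pt j))
            + ∑ k ∈ Finset.univ.erase j, c k * (Real.exp (p k) - Real.exp (pt k)) := by
      funext s
      rw [hdef, ← Finset.add_sum_erase _ _ (Finset.mem_univ j)]
      congr 1
      · simp
      · exact Finset.sum_congr rfl fun k hk => by
          rw [Function.update_of_ne (Finset.ne_of_mem_erase hk)]
    rw [hfun]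
    have h := ((((Real.hasDerivAt_exp (p j)).sub_const (Real.exp (pt j))).const_mul
        (c j)).add_const (∑ k ∈ Finset.univ.erase j, c k * (Real.exp (p k) - Real.exp (pt k))))
    exact h.deriv
  have key2 : ∀ j : Fin N,
      deriv (fun s => hplus p (Function.update pt j s)) (pt j) = -(c j * Real.exp (pt j)) := by
    intro j
    have hfun : (fun s => hplus p (Function.update pt j s))
        = fun s => c j * (Real.exp (p j) - Real.exp s)
            + ∑ k ∈ Finset.univ.erase j, c k * (Real.exp (p k) - Real.exp (pt k)) := by
      funext s
      rw [hdef, ← Finset.add_sum_erase _ _ (Finset.mem_univ j)]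
      congr 1
      · simp
      · exact Finset.sum_congr rfl fun k hk => by
          rw [Function.update_of_ne (Finset.ne_of_mem_erase hk)]
    rw [hfun]
    have h := ((((Real.hasDerivAt_exp (pt j)).const_sub (Real.exp (p j))).const_mul
        (c j)).add_const (∑ k ∈ Finset.univ.erase j, c k * (Real.exp (p k) - Real.exp (pt k))))
    rw [h.deriv]; ring
  have hsum : (∑ j, (deriv (fun s => hplus (Function.update p j s) pt) (p j)
          + deriv (fun s => hplus p (Function.update pt j s)) (pt j)))
      = ∑ k, c k * (Real.exp (p k) - Real.exp (pt k)) := by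
    refine Finset.sum_congr rfl fun j _ => ?_
    rw [key1 j, key2 j]; ring
  constructor
  · rw [hsum, key1 i]
    rw [one_div, inv_mul_eq_div, mul_comm, mul_div_assoc, div_self (hc i), mul_one, add_comm]
  · rw [hsum, key2 i]
    rw [one_div, inv_mul_eq_div, neg_div, mul_comm, mul_div_assoc, div_self (hc i), mul_one,
      sub_neg_eq_add, add_comm]
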